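/- arXiv:2502.11672 — 3 statements merged into one kernel-verified Lean document; each statement's English description precedes it below -/
import Mathlib

section
/- Let u < v be reals and let f : [u, v] → ℝ be twice continuously differentiable and convex on [u, v], and set M = sup_{x ∈ [u,v]} f″(x) and h = v − u. Then for every x ∈ [u, v], 0 ≤ f(x) − max( f(u) + f′(u)(x − u), f(v) + f′(v)(x − v) ) ≤ M·h². Consequently, for a uniform partition u = x_0 < x_1 < … < x_n = v with x_i = u + i·h_n and h_n = (v − u)/n, the piecewise tangent approximator p_n defined on each [x_i, x_{i+1}] as the maximum of the tangent lines at x_i and at x_{i+1} satisfies sup_{x ∈ [u,v]} |f(x) − p_n(x)| ≤ M·h_n². -/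
/-- Error bound for the piecewise tangent approximation of a twice continuously
differentiable convex function: on a single segment the error is at most
`M * h ^ 2`, and on a uniform partition with `n` segments the piecewise
tangent approximator is within `M * ((v - u) / n) ^ 2` of the function. -/
theorem piecewise_tangent_error_bound
    (u v : ℝ) (huv : u < v) (f f' f'' : ℝ → ℝ)
    (hf' : ∀ x ∈ Set.Icc u v, HasDerivWithinAt f (f' x) (Set.Icc u v) x)
    (hf'' : ∀ x ∈ Set.Icc u v, HasDerivWithinAt f' (f'' x) (Set.Icc u v) x)
    (hf''c : ContinuousOn f'' (Set.Icc u v))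
    (hconv : ConvexOn ℝ (Set.Icc u v) f)
    (M : ℝ) (hM : M = sSup (f'' '' Set.Icc u v)) :
    (∀ x ∈ Set.Icc u v,
        0 ≤ f x - max (f u + f' u * (x - u)) (f v + f' v * (x - v)) ∧
        f x - max (f u + f' u * (x - u)) (f v + f' v * (x - v))
          ≤ M * (v - u) ^ 2) ∧
    (∀ n : ℕ, 0 < n → ∀ p : ℝ → ℝ,
      (∀ i : ℕ, i < n →
        ∀ x ∈ Set.Icc (u + (i : ℝ) * ((v - u) / n))
            (u + ((i : ℝ) + 1) * ((v - u) / n)),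
          p x = max
            (f (u + (i : ℝ) * ((v - u) / n)) +
              f' (u + (i : ℝ) * ((v - u) / n)) *
                (x - (u + (i : ℝ) * ((v - u) / n))))
            (f (u + ((i : ℝ) + 1) * ((v - u) / n)) +
              f' (u + ((i : ℝ) + 1) * ((v - u) / n)) *
                (x - (u + ((i : ℝ) + 1) * ((v - u) / n))))) →
      ∀ x ∈ Set.Icc u v, |f x - p x| ≤ M * ((v - u) / n) ^ 2) := by
  have hfd : DifferentiableOn ℝ f (Set.Icc u v) :=
    fun x hx => (hf' x hx).differentiableWithinAt
  have hfc : ContinuousOn f (Set.Icc u v) := hfd.continuousOn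
  have hf'd : DifferentiableOn ℝ f' (Set.Icc u v) :=
    fun x hx => (hf'' x hx).differentiableWithinAt
  have hf'c : ContinuousOn f' (Set.Icc u v) := hf'd.continuousOn
  -- tangent lines lie below the graph
  have tangent_le : ∀ c ∈ Set.Icc u v, ∀ x ∈ Set.Icc u v,
      f c + f' c * (x - c) ≤ f x := by
    intro c hc x hx
    rcases lt_trichotomy c x with h | h | h
    · have h1 := hconv.le_slope_of_hasDerivWithinAt hc hx h (hf' c hc)
      rw [slope_def_field] at h1
      have h2 : f' c * (x - c) ≤ f x - f c :=
        (le_div_iff₀ (by linarith)).mp h1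
      linarith
    · subst h; simp
    · have h1 := hconv.slope_le_of_hasDerivWithinAt hx hc h (hf' c hc)
      rw [slope_def_field] at h1
      have h2 : f c - f x ≤ f' c * (c - x) :=
        (div_le_iff₀ (by linarith)).mp h1
      nlinarith
  -- mean value theorems on subintervals
  have mvt_f : ∀ a b : ℝ, u ≤ a → a < b → b ≤ v →
      ∃ c ∈ Set.Ioo a b, f' c = (f b - f a) / (b - a) := by
    intro a b hua hab hbv
    refine exists_hasDerivAt_eq_slope f f' hab
      (hfc.mono (Set.Icc_subset_Icc hua hbv)) (fun x hx => ?_)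
    have hx' : x ∈ Set.Icc u v := ⟨by linarith [hx.1], by linarith [hx.2]⟩
    exact (hf' x hx').hasDerivAt
      (Icc_mem_nhds (by linarith [hx.1]) (by linarith [hx.2]))
  have mvt_f' : ∀ a b : ℝ, u ≤ a → a < b → b ≤ v →
      ∃ c ∈ Set.Ioo a b, f'' c = (f' b - f' a) / (b - a) := by
    intro a b hua hab hbv
    refine exists_hasDerivAt_eq_slope f' f'' hab
      (hf'c.mono (Set.Icc_subset_Icc hua hbv)) (fun x hx => ?_)
    have hx' : x ∈ Set.Icc u v := ⟨by linarith [hx.1], by linarith [hx.2]⟩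
    exact (hf'' x hx').hasDerivAt
      (Icc_mem_nhds (by linarith [hx.1]) (by linarith [hx.2]))
  -- monotonicity of f'
  have mono' : ∀ a ∈ Set.Icc u v, ∀ b ∈ Set.Icc u v, a ≤ b → f' a ≤ f' b := by
    intro a ha b hb hab
    rcases eq_or_lt_of_le hab with rfl | h
    · exact le_rfl
    exact (hconv.le_slope_of_hasDerivWithinAt ha hb h (hf' a ha)).trans
      (hconv.slope_le_of_hasDerivWithinAt ha hb h (hf' b hb))
  -- M bounds f'' from above
  have hMub : ∀ y ∈ Set.Icc u v, f'' y ≤ M := by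
    intro y hy
    rw [hM]
    exact le_csSup (isCompact_Icc.image_of_continuousOn hf''c).bddAbove
      ⟨y, hy, rfl⟩
  -- M is nonnegative
  have hM0 : 0 ≤ M := by
    obtain ⟨d, hd, hdeq⟩ := mvt_f' u v le_rfl huv le_rfl
    have hdS : d ∈ Set.Icc u v := ⟨hd.1.le, hd.2.le⟩
    have hmono : f' u ≤ f' v :=
      mono' u ⟨le_rfl, huv.le⟩ v ⟨huv.le, le_rfl⟩ huv.le
    have h0 : 0 ≤ f'' d := by
      rw [hdeq]; exact div_nonneg (by linarith) (by linarith)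
    linarith [hMub d hdS]
  -- the key single-segment estimate
  have seg : ∀ a b : ℝ, a ∈ Set.Icc u v → b ∈ Set.Icc u v → a < b →
      ∀ x ∈ Set.Icc a b,
        0 ≤ f x - max (f a + f' a * (x - a)) (f b + f' b * (x - b)) ∧
        f x - max (f a + f' a * (x - a)) (f b + f' b * (x - b))
          ≤ M * (b - a) ^ 2 := by
    intro a b ha hb hab x hx
    have hxS : x ∈ Set.Icc u v := ⟨le_trans ha.1 hx.1, le_trans hx.2 hb.2⟩
    constructor
    · rw [sub_nonneg, max_le_iff]
      exact ⟨tangent_le a ha x hxS, tangent_le b hb x hxS⟩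
    · have key : f x - (f a + f' a * (x - a)) ≤ M * (b - a) ^ 2 := by
        rcases eq_or_lt_of_le hx.1 with rfl | hax
        · have h0 : (0:ℝ) ≤ M * (b - a) ^ 2 := by positivity
          simpa using h0
        · obtain ⟨c, hc, hceq⟩ := mvt_f a x ha.1 hax hxS.2
          obtain ⟨d, hd, hdeq⟩ := mvt_f' a c ha.1 hc.1 (by linarith [hc.2, hxS.2])
          rw [eq_div_iff (sub_ne_zero_of_ne hax.ne')] at hceq
          rw [eq_div_iff (sub_ne_zero_of_ne hc.1.ne')] at hdeq
          have hdS : d ∈ Set.Icc u v :=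
            ⟨by linarith [hd.1, ha.1], by linarith [hd.2, hc.2, hxS.2]⟩
          have hMd := hMub d hdS
          have e3 : f' c * (x - a) - f' a * (x - a) = f'' d * ((c - a) * (x - a)) := by
            nlinarith [hdeq]
          have hca : 0 < c - a := by linarith [hd.2, hd.1, hc.1]
          have hxa : 0 < x - a := by linarith
          have hcb : c - a ≤ b - a := by linarith [hc.2, hx.2]
          have hxb : x - a ≤ b - a := by linarith [hx.2]
          have s1 : f'' d * ((c - a) * (x - a)) ≤ M * ((c - a) * (x - a)) :=
            mul_le_mul_of_nonneg_right hMd (by positivity)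
          have s2 : M * ((c - a) * (x - a)) ≤ M * ((b - a) * (b - a)) :=
            mul_le_mul_of_nonneg_left
              (mul_le_mul hcb hxb hxa.le (by linarith)) hM0
          nlinarith [hceq, e3, s1, s2]
      exact le_trans (sub_le_sub_left (le_max_left _ _) (f x)) key
  constructor
  · exact fun x hx => seg u v ⟨le_rfl, huv.le⟩ ⟨huv.le, le_rfl⟩ huv x hx
  · intro n hn p hp x hx
    have hn' : (0:ℝ) < (n:ℝ) := by exact_mod_cast hn
    have hstep : (0:ℝ) < (v - u) / n := div_pos (by linarith) hn'
    set t : ℝ := (x - u) / ((v - u) / n) with ht_def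
    have ht0 : 0 ≤ t := div_nonneg (by linarith [hx.1]) hstep.le
    have htmul : t * ((v - u) / n) = x - u := div_mul_cancel₀ _ hstep.ne'
    have htn : t ≤ (n:ℝ) := by
      rw [ht_def, div_le_iff₀ hstep]
      have h3 : (n:ℝ) * ((v - u) / n) = v - u := by field_simp
      linarith [hx.2]
    set i : ℕ := min ⌊t⌋₊ (n - 1) with hi_def
    have hin : i < n := lt_of_le_of_lt (min_le_right _ _) (Nat.sub_lt hn one_pos)
    have hcast : ((n - 1 : ℕ) : ℝ) = (n:ℝ) - 1 := by
      push_cast [Nat.cast_sub hn]; ring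
    have hi_le : (i:ℝ) ≤ t := by
      rcases le_or_gt ⌊t⌋₊ (n - 1) with hc | hc
      · rw [hi_def, min_eq_left hc]; exact Nat.floor_le ht0
      · rw [hi_def, min_eq_right hc.le, hcast]
        have hnle : n ≤ ⌊t⌋₊ := by omega
        have : (n:ℝ) ≤ t := by exact_mod_cast (Nat.le_floor_iff ht0).mp hnle
        linarith
    have ht_le : t ≤ (i:ℝ) + 1 := by
      rcases le_or_gt ⌊t⌋₊ (n - 1) with hc | hc
      · rw [hi_def, min_eq_left hc]; exact (Nat.lt_floor_add_one t).le
      · rw [hi_def, min_eq_right hc.le, hcast]; linarith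
    have hx_seg : x ∈ Set.Icc (u + (i:ℝ) * ((v - u) / n))
        (u + ((i:ℝ) + 1) * ((v - u) / n)) := by
      constructor
      · have := mul_le_mul_of_nonneg_right hi_le hstep.le
        linarith [htmul]
      · have := mul_le_mul_of_nonneg_right ht_le hstep.le
        linarith [htmul]
    have haS : u + (i:ℝ) * ((v - u) / n) ∈ Set.Icc u v := by
      constructor
      · have : (0:ℝ) ≤ (i:ℝ) * ((v - u) / n) := by positivity
        linarith
      · have hi1 : (i:ℝ) ≤ (n:ℝ) := by exact_mod_cast hin.le
        have h2 : (i:ℝ) * ((v - u) / n) ≤ (n:ℝ) * ((v - u) / n) :=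
          mul_le_mul_of_nonneg_right hi1 hstep.le
        have h3 : (n:ℝ) * ((v - u) / n) = v - u := by
          field_simp
        linarith
    have hbS : u + ((i:ℝ) + 1) * ((v - u) / n) ∈ Set.Icc u v := by
      constructor
      · have : (0:ℝ) ≤ ((i:ℝ) + 1) * ((v - u) / n) := by positivity
        linarith
      · have hi1 : (i:ℝ) + 1 ≤ (n:ℝ) := by exact_mod_cast Nat.succ_le_of_lt hin
        have h2 : ((i:ℝ) + 1) * ((v - u) / n) ≤ (n:ℝ) * ((v - u) / n) :=
          mul_le_mul_of_nonneg_right hi1 hstep.le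
        have h3 : (n:ℝ) * ((v - u) / n) = v - u := by
          field_simp
        linarith
    have hab : u + (i:ℝ) * ((v - u) / n) < u + ((i:ℝ) + 1) * ((v - u) / n) := by
      nlinarith [hstep]
    obtain ⟨h1, h2⟩ := seg _ _ haS hbS hab x hx_seg
    rw [hp i hin x hx_seg]
    have hba : (u + ((i:ℝ) + 1) * ((v - u) / n)) - (u + (i:ℝ) * ((v - u) / n))
        = (v - u) / n := by ring
    rw [hba] at h2
    rw [abs_of_nonneg h1]
    exact h2
end

section
/- Let x_0 < x_1 < … < x_n be reals and let p : [x_0, x_n] → ℝ be a continuous function such that for each i ∈ {1, …, n} there are constants c_i, v_i ∈ ℝ with p(x) = c_i + v_i·x for all x ∈ [x_{i−1}, x_i]. Set v_0 = 0. Then for every x ∈ [x_0, x_n], p(x) = c_1 + v_1·x_0 + Σ_{i=1}^{n} (v_i − v_{i−1})·max(x − x_{i−1}, 0). -/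
/-- Any continuous piecewise affine function on an interval can be written
exactly as an affine combination of ReLU units with breakpoints at the
subinterval endpoints. -/
theorem piecewise_affine_as_relu_network
    (n : ℕ) (hn : 0 < n) (x : ℕ → ℝ)
    (hx : ∀ i < n, x i < x (i + 1))
    (p : ℝ → ℝ) (hp : ContinuousOn p (Set.Icc (x 0) (x n)))
    (c v : ℕ → ℝ) (hv0 : v 0 = 0)
    (haff : ∀ i, 1 ≤ i → i ≤ n →
      ∀ t ∈ Set.Icc (x (i - 1)) (x i), p t = c i + v i * t) :
    ∀ t ∈ Set.Icc (x 0) (x n),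
      p t = c 1 + v 1 * x 0 +
        ∑ i ∈ Finset.Icc 1 n, (v i - v (i - 1)) * max (t - x (i - 1)) 0 := by
  classical
  have hmono : ∀ j, j ≤ n → ∀ i, i ≤ j → x i ≤ x j := by
    intro j
    induction j with
    | zero => intro _ i hi; interval_cases i; exact le_refl _
    | succ j ih =>
      intro hj i hi
      rcases Nat.eq_or_lt_of_le hi with h | h
      · rw [h]
      · have h1 : x i ≤ x j := ih (by omega) i (by omega)
        have h2 : x j < x (j + 1) := hx j (by omega)
        linarith
  have key : ∀ k, 1 ≤ k → k ≤ n → ∀ t : ℝ,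
      c k + v k * t = c 1 + v 1 * x 0 +
        ∑ i ∈ Finset.Icc 1 k, (v i - v (i - 1)) * (t - x (i - 1)) := by
    intro k
    induction k with
    | zero => intro h; omega
    | succ k ih =>
      intro _ hk t
      by_cases hk1 : k = 0
      · subst hk1
        rw [Finset.Icc_self, Finset.sum_singleton]
        simp [hv0]
        ring
      · have h1k : 1 ≤ k := by omega
        rw [Finset.sum_Icc_succ_top (by omega : 1 ≤ k + 1)]
        have ihk := ih h1k (by omega) t
        have hxk1 : x (k - 1) ≤ x k := hmono k (by omega) (k - 1) (by omega)
        have hj1 : p (x k) = c k + v k * x k :=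
          haff k h1k (by omega) (x k) ⟨hxk1, le_refl _⟩
        have hxk2 : x k ≤ x (k + 1) := le_of_lt (hx k (by omega))
        have hj2 : p (x k) = c (k + 1) + v (k + 1) * x k := by
          have := haff (k + 1) (by omega) hk (x k)
          simp only [Nat.add_sub_cancel] at this
          exact this ⟨le_refl _, hxk2⟩
        have hjoin : c k + v k * x k = c (k + 1) + v (k + 1) * x k := by
          rw [← hj1, hj2]
        simp only [Nat.add_sub_cancel]
        rw [← add_assoc, ← ihk]
        linear_combination -hjoin
  intro t ht
  obtain ⟨ht0, htn⟩ := ht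
  have hex : ∃ k, 1 ≤ k ∧ k ≤ n ∧ x (k - 1) ≤ t ∧ t ≤ x k := by
    set k0 := Nat.findGreatest (fun k => x k ≤ t) n with hk0def
    have hk0le : k0 ≤ n := Nat.findGreatest_le n
    have hk0 : x k0 ≤ t := Nat.findGreatest_spec (P := fun k => x k ≤ t) (Nat.zero_le n) ht0
    by_cases hk0n : k0 = n
    · refine ⟨n, hn, le_refl n, ?_, htn⟩
      rw [hk0n] at hk0
      exact le_trans (hmono n (le_refl n) (n - 1) (by omega)) hk0
    · refine ⟨k0 + 1, by omega, by omega, by simpa using hk0, ?_⟩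
      by_contra h
      push_neg at h
      have : k0 + 1 ≤ k0 := Nat.le_findGreatest (by omega) (le_of_lt h)
      omega
  obtain ⟨k, hk1, hkn, htl, htr⟩ := hex
  have hpt : p t = c k + v k * t := haff k hk1 hkn t ⟨htl, htr⟩
  rw [hpt, key k hk1 hkn t]
  congr 1
  have hzero : ∀ i ∈ Finset.Icc 1 n, i ∉ Finset.Icc 1 k →
      (v i - v (i - 1)) * max (t - x (i - 1)) 0 = 0 := by
    intro i hi hik
    simp only [Finset.mem_Icc] at hi hik
    have hki : k ≤ i - 1 := by omega
    have : t ≤ x (i - 1) := le_trans htr (hmono (i - 1) (by omega) k hki)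
    rw [max_eq_right (by linarith), mul_zero]
  rw [← Finset.sum_subset (Finset.Icc_subset_Icc_right hkn) hzero]
  apply Finset.sum_congr rfl
  intro i hi
  simp only [Finset.mem_Icc] at hi
  have : x (i - 1) ≤ t :=
    le_trans (hmono (k - 1) (by omega) (i - 1) (by omega)) htl
  rw [max_eq_left (by linarith)]
end

section
/- Let a < b be reals and let f : [a, b] → ℝ be differentiable and strictly concave on [a, b] (so that f′(a) > f′(b)). Define a′ = (f(a) − f(b) − (f′(a)·a − f′(b)·b)) / (f′(b) − f′(a)). Then a < a′ < b. -/
/-- The intersection point of the tangent lines at the endpoints of a strictly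
concave differentiable function lies strictly inside the interval. -/
theorem tangent_intersection_interior_concave
    (a b : ℝ) (hab : a < b) (f f' : ℝ → ℝ)
    (hdiff : ∀ x ∈ Set.Icc a b, HasDerivWithinAt f (f' x) (Set.Icc a b) x)
    (hconc : StrictConcaveOn ℝ (Set.Icc a b) f)
    (hslope : f' b < f' a)
    (a' : ℝ)
    (ha' : a' = (f a - f b - (f' a * a - f' b * b)) / (f' b - f' a)) :
    a < a' ∧ a' < b := by
  have ha : a ∈ Set.Icc a b := Set.left_mem_Icc.2 hab.le
  have hb : b ∈ Set.Icc a b := Set.right_mem_Icc.2 hab.le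
  have h1 : slope f a b < f' a :=
    hconc.slope_lt_of_hasDerivWithinAt ha hb hab (hdiff a ha)
  have h2 : f' b < slope f a b :=
    hconc.lt_slope_of_hasDerivWithinAt ha hb hab (hdiff b hb)
  have hba : (0:ℝ) < b - a := by linarith
  rw [slope_def_field, div_lt_iff₀ hba] at h1
  rw [slope_def_field, lt_div_iff₀ hba] at h2
  have hden : f' b - f' a < 0 := by linarith
  constructor
  · rw [ha', lt_div_iff_of_neg hden]
    nlinarith
  · rw [ha', div_lt_iff_of_neg hden]
    nlinarith
end
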